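/- Let σ, f : ℝ → ℝ be twice continuously differentiable and let w₁, w₂, w₃, w₄, b₁, b₂ ∈ ℝ. Define F(x,y,z) = σ(w₃ f(w₁x + w₂y + b₁) + w₄z + b₂). Then at every point of ℝ³: F_{xy}F_x = F_{xx}F_y, F_{yy}F_x = F_{xy}F_y, and F_{yz}F_x = F_{xz}F_y. -/

import Mathlib

/-- for `F(x,y,z) = σ(w₃ f(w₁x + w₂y + b₁) + w₄z + b₂)` with `σ, f` C²,
the identities `F_{xy}F_x = F_{xx}F_y`, `F_{yy}F_x = F_{xy}F_y`, `F_{yz}F_x = F_{xz}F_y`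
hold everywhere on ℝ³. -/
theorem stmt3 (σ f : ℝ → ℝ) (hσ : ContDiff ℝ 2 σ) (hf : ContDiff ℝ 2 f)
    (w₁ w₂ w₃ w₄ b₁ b₂ : ℝ)
    (F : ℝ → ℝ → ℝ → ℝ)
    (hF : ∀ x y z, F x y z = σ (w₃ * f (w₁ * x + w₂ * y + b₁) + w₄ * z + b₂)) :
    ∀ x y z : ℝ,
      (deriv (fun x' => deriv (fun y' => F x' y' z) y) x *
          deriv (fun x' => F x' y z) x =
        deriv (fun x' => deriv (fun x'' => F x'' y z) x') x *
          deriv (fun y' => F x y' z) y) ∧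
      (deriv (fun y' => deriv (fun y'' => F x y'' z) y') y *
          deriv (fun x' => F x' y z) x =
        deriv (fun x' => deriv (fun y' => F x' y' z) y) x *
          deriv (fun y' => F x y' z) y) ∧
      (deriv (fun y' => deriv (fun z' => F x y' z') z) y *
          deriv (fun x' => F x' y z) x =
        deriv (fun x' => deriv (fun z' => F x' y z') z) x *
          deriv (fun y' => F x y' z) y) := by
  have hfd : Differentiable ℝ f := hf.differentiable two_ne_zero
  have hσd : Differentiable ℝ σ := hσ.differentiable two_ne_zero
  have hf2 : ContDiff ℝ ((1 : ℕ) + 1) f := by exact_mod_cast hf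
  have hσ2 : ContDiff ℝ ((1 : ℕ) + 1) σ := by exact_mod_cast hσ
  have hfd' : Differentiable ℝ (deriv f) :=
    (contDiff_succ_iff_deriv.mp hf2).2.2.differentiable (by norm_num)
  have hσd' : Differentiable ℝ (deriv σ) :=
    (contDiff_succ_iff_deriv.mp hσ2).2.2.differentiable (by norm_num)
  intro x y z
  -- affine inner maps
  have hTx : ∀ a b : ℝ, HasDerivAt (fun x' : ℝ => w₁ * x' + w₂ * b + b₁) w₁ a := by
    intro a b
    simpa using (((hasDerivAt_id a).const_mul w₁).add_const (w₂ * b)).add_const b₁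
  have hTy : ∀ a b : ℝ, HasDerivAt (fun y' : ℝ => w₁ * a + w₂ * y' + b₁) w₂ b := by
    intro a b
    simpa using ((((hasDerivAt_id b).const_mul w₂).const_add (w₁ * a)).add_const b₁)
  -- argument of σ
  have hSx : ∀ a b c : ℝ, HasDerivAt
      (fun x' : ℝ => w₃ * f (w₁ * x' + w₂ * b + b₁) + w₄ * c + b₂)
      (w₃ * (deriv f (w₁ * a + w₂ * b + b₁) * w₁)) a := by
    intro a b c
    have := ((((hfd _).hasDerivAt.comp a (hTx a b)).const_mul w₃).add_const
      (w₄ * c)).add_const b₂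
    simpa [Function.comp] using this
  have hSy : ∀ a b c : ℝ, HasDerivAt
      (fun y' : ℝ => w₃ * f (w₁ * a + w₂ * y' + b₁) + w₄ * c + b₂)
      (w₃ * (deriv f (w₁ * a + w₂ * b + b₁) * w₂)) b := by
    intro a b c
    have := ((((hfd _).hasDerivAt.comp b (hTy a b)).const_mul w₃).add_const
      (w₄ * c)).add_const b₂
    simpa [Function.comp] using this
  have hSz : ∀ a b c : ℝ, HasDerivAt
      (fun z' : ℝ => w₃ * f (w₁ * a + w₂ * b + b₁) + w₄ * z' + b₂) w₄ c := by
    intro a b c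
    simpa using (((hasDerivAt_id c).const_mul w₄).const_add
      (w₃ * f (w₁ * a + w₂ * b + b₁))).add_const b₂
  -- first derivatives of F
  have hFx : ∀ a b c : ℝ, HasDerivAt (fun x' => F x' b c)
      (deriv σ (w₃ * f (w₁ * a + w₂ * b + b₁) + w₄ * c + b₂) *
        (w₃ * (deriv f (w₁ * a + w₂ * b + b₁) * w₁))) a := by
    intro a b c
    have := (hσd _).hasDerivAt.comp a (hSx a b c)
    simpa [Function.comp_def, hF] using this
  have hFy : ∀ a b c : ℝ, HasDerivAt (fun y' => F a y' c)
      (deriv σ (w₃ * f (w₁ * a + w₂ * b + b₁) + w₄ * c + b₂) *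
        (w₃ * (deriv f (w₁ * a + w₂ * b + b₁) * w₂))) b := by
    intro a b c
    have := (hσd _).hasDerivAt.comp b (hSy a b c)
    simpa [Function.comp_def, hF] using this
  have hFz : ∀ a b c : ℝ, HasDerivAt (fun z' => F a b z')
      (deriv σ (w₃ * f (w₁ * a + w₂ * b + b₁) + w₄ * c + b₂) * w₄) c := by
    intro a b c
    have := (hσd _).hasDerivAt.comp c (hSz a b c)
    simpa [Function.comp_def, hF] using this
  have dFx : ∀ a b c : ℝ, deriv (fun x' => F x' b c) a =
      deriv σ (w₃ * f (w₁ * a + w₂ * b + b₁) + w₄ * c + b₂) *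
        (w₃ * (deriv f (w₁ * a + w₂ * b + b₁) * w₁)) := fun a b c => (hFx a b c).deriv
  have dFy : ∀ a b c : ℝ, deriv (fun y' => F a y' c) b =
      deriv σ (w₃ * f (w₁ * a + w₂ * b + b₁) + w₄ * c + b₂) *
        (w₃ * (deriv f (w₁ * a + w₂ * b + b₁) * w₂)) := fun a b c => (hFy a b c).deriv
  have dFz : ∀ a b c : ℝ, deriv (fun z' => F a b z') c =
      deriv σ (w₃ * f (w₁ * a + w₂ * b + b₁) + w₄ * c + b₂) * w₄ :=
    fun a b c => (hFz a b c).deriv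
  -- derivative of P(x') = σ'(S) * (w₃ * f'(T)) in x and in y
  have hPx : ∀ a b c : ℝ, HasDerivAt
      (fun x' => deriv σ (w₃ * f (w₁ * x' + w₂ * b + b₁) + w₄ * c + b₂) *
        (w₃ * deriv f (w₁ * x' + w₂ * b + b₁)))
      (deriv (deriv σ) (w₃ * f (w₁ * a + w₂ * b + b₁) + w₄ * c + b₂) *
          (w₃ * (deriv f (w₁ * a + w₂ * b + b₁) * w₁)) *
          (w₃ * deriv f (w₁ * a + w₂ * b + b₁)) +
        deriv σ (w₃ * f (w₁ * a + w₂ * b + b₁) + w₄ * c + b₂) *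
          (w₃ * (deriv (deriv f) (w₁ * a + w₂ * b + b₁) * w₁))) a := by
    intro a b c
    have hA : HasDerivAt
        (fun x' => deriv σ (w₃ * f (w₁ * x' + w₂ * b + b₁) + w₄ * c + b₂))
        (deriv (deriv σ) (w₃ * f (w₁ * a + w₂ * b + b₁) + w₄ * c + b₂) *
          (w₃ * (deriv f (w₁ * a + w₂ * b + b₁) * w₁))) a := by
      simpa [Function.comp_def] using (hσd' _).hasDerivAt.comp a (hSx a b c)
    have hB : HasDerivAt (fun x' => w₃ * deriv f (w₁ * x' + w₂ * b + b₁))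
        (w₃ * (deriv (deriv f) (w₁ * a + w₂ * b + b₁) * w₁)) a := by
      simpa [Function.comp, mul_assoc] using
        ((hfd' _).hasDerivAt.comp a (hTx a b)).const_mul w₃
    exact hA.mul hB
  have hPy : ∀ a b c : ℝ, HasDerivAt
      (fun y' => deriv σ (w₃ * f (w₁ * a + w₂ * y' + b₁) + w₄ * c + b₂) *
        (w₃ * deriv f (w₁ * a + w₂ * y' + b₁)))
      (deriv (deriv σ) (w₃ * f (w₁ * a + w₂ * b + b₁) + w₄ * c + b₂) *
          (w₃ * (deriv f (w₁ * a + w₂ * b + b₁) * w₂)) *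
          (w₃ * deriv f (w₁ * a + w₂ * b + b₁)) +
        deriv σ (w₃ * f (w₁ * a + w₂ * b + b₁) + w₄ * c + b₂) *
          (w₃ * (deriv (deriv f) (w₁ * a + w₂ * b + b₁) * w₂))) b := by
    intro a b c
    have hA : HasDerivAt
        (fun y' => deriv σ (w₃ * f (w₁ * a + w₂ * y' + b₁) + w₄ * c + b₂))
        (deriv (deriv σ) (w₃ * f (w₁ * a + w₂ * b + b₁) + w₄ * c + b₂) *
          (w₃ * (deriv f (w₁ * a + w₂ * b + b₁) * w₂))) b := by
      simpa [Function.comp_def] using (hσd' _).hasDerivAt.comp b (hSy a b c)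
    have hB : HasDerivAt (fun y' => w₃ * deriv f (w₁ * a + w₂ * y' + b₁))
        (w₃ * (deriv (deriv f) (w₁ * a + w₂ * b + b₁) * w₂)) b := by
      simpa [Function.comp, mul_assoc] using
        ((hfd' _).hasDerivAt.comp b (hTy a b)).const_mul w₃
    exact hA.mul hB
  -- second derivatives
  have dFxy : deriv (fun x' => deriv (fun y' => F x' y' z) y) x =
      (deriv (deriv σ) (w₃ * f (w₁ * x + w₂ * y + b₁) + w₄ * z + b₂) *
          (w₃ * (deriv f (w₁ * x + w₂ * y + b₁) * w₁)) *
          (w₃ * deriv f (w₁ * x + w₂ * y + b₁)) +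
        deriv σ (w₃ * f (w₁ * x + w₂ * y + b₁) + w₄ * z + b₂) *
          (w₃ * (deriv (deriv f) (w₁ * x + w₂ * y + b₁) * w₁))) * w₂ := by
    have e : (fun x' => deriv (fun y' => F x' y' z) y) =
        fun x' => (deriv σ (w₃ * f (w₁ * x' + w₂ * y + b₁) + w₄ * z + b₂) *
          (w₃ * deriv f (w₁ * x' + w₂ * y + b₁))) * w₂ := by
      funext a; rw [dFy a y z]; ring
    rw [e]; exact ((hPx x y z).mul_const w₂).deriv
  have dFxx : deriv (fun x' => deriv (fun x'' => F x'' y z) x') x =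
      (deriv (deriv σ) (w₃ * f (w₁ * x + w₂ * y + b₁) + w₄ * z + b₂) *
          (w₃ * (deriv f (w₁ * x + w₂ * y + b₁) * w₁)) *
          (w₃ * deriv f (w₁ * x + w₂ * y + b₁)) +
        deriv σ (w₃ * f (w₁ * x + w₂ * y + b₁) + w₄ * z + b₂) *
          (w₃ * (deriv (deriv f) (w₁ * x + w₂ * y + b₁) * w₁))) * w₁ := by
    have e : (fun x' => deriv (fun x'' => F x'' y z) x') =
        fun x' => (deriv σ (w₃ * f (w₁ * x' + w₂ * y + b₁) + w₄ * z + b₂) *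
          (w₃ * deriv f (w₁ * x' + w₂ * y + b₁))) * w₁ := by
      funext a; rw [dFx a y z]; ring
    rw [e]; exact ((hPx x y z).mul_const w₁).deriv
  have dFyy : deriv (fun y' => deriv (fun y'' => F x y'' z) y') y =
      (deriv (deriv σ) (w₃ * f (w₁ * x + w₂ * y + b₁) + w₄ * z + b₂) *
          (w₃ * (deriv f (w₁ * x + w₂ * y + b₁) * w₂)) *
          (w₃ * deriv f (w₁ * x + w₂ * y + b₁)) +
        deriv σ (w₃ * f (w₁ * x + w₂ * y + b₁) + w₄ * z + b₂) *
          (w₃ * (deriv (deriv f) (w₁ * x + w₂ * y + b₁) * w₂))) * w₂ := by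
    have e : (fun y' => deriv (fun y'' => F x y'' z) y') =
        fun y' => (deriv σ (w₃ * f (w₁ * x + w₂ * y' + b₁) + w₄ * z + b₂) *
          (w₃ * deriv f (w₁ * x + w₂ * y' + b₁))) * w₂ := by
      funext b; rw [dFy x b z]; ring
    rw [e]; exact ((hPy x y z).mul_const w₂).deriv
  have dFyz : deriv (fun y' => deriv (fun z' => F x y' z') z) y =
      (deriv (deriv σ) (w₃ * f (w₁ * x + w₂ * y + b₁) + w₄ * z + b₂) *
        (w₃ * (deriv f (w₁ * x + w₂ * y + b₁) * w₂))) * w₄ := by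
    have e : (fun y' => deriv (fun z' => F x y' z') z) =
        fun y' => deriv σ (w₃ * f (w₁ * x + w₂ * y' + b₁) + w₄ * z + b₂) * w₄ := by
      funext b; rw [dFz x b z]
    rw [e]
    have hA : HasDerivAt
        (fun y' => deriv σ (w₃ * f (w₁ * x + w₂ * y' + b₁) + w₄ * z + b₂))
        (deriv (deriv σ) (w₃ * f (w₁ * x + w₂ * y + b₁) + w₄ * z + b₂) *
          (w₃ * (deriv f (w₁ * x + w₂ * y + b₁) * w₂))) y := by
      simpa [Function.comp_def] using (hσd' _).hasDerivAt.comp y (hSy x y z)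
    exact (hA.mul_const w₄).deriv
  have dFxz : deriv (fun x' => deriv (fun z' => F x' y z') z) x =
      (deriv (deriv σ) (w₃ * f (w₁ * x + w₂ * y + b₁) + w₄ * z + b₂) *
        (w₃ * (deriv f (w₁ * x + w₂ * y + b₁) * w₁))) * w₄ := by
    have e : (fun x' => deriv (fun z' => F x' y z') z) =
        fun x' => deriv σ (w₃ * f (w₁ * x' + w₂ * y + b₁) + w₄ * z + b₂) * w₄ := by
      funext a; rw [dFz a y z]
    rw [e]
    have hA : HasDerivAt
        (fun x' => deriv σ (w₃ * f (w₁ * x' + w₂ * y + b₁) + w₄ * z + b₂))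
        (deriv (deriv σ) (w₃ * f (w₁ * x + w₂ * y + b₁) + w₄ * z + b₂) *
          (w₃ * (deriv f (w₁ * x + w₂ * y + b₁) * w₁))) x := by
      simpa [Function.comp_def] using (hσd' _).hasDerivAt.comp x (hSx x y z)
    exact (hA.mul_const w₄).deriv
  refine ⟨?_, ?_, ?_⟩
  · rw [dFxy, dFxx, dFx x y z, dFy x y z]; ring
  · rw [dFyy, dFxy, dFx x y z, dFy x y z]; ring
  · rw [dFyz, dFxz, dFx x y z, dFy x y z]; ring
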